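/- Let (X, d) be a metric space admitting a metric Z-structure (X̂, Z). Then Z has finite Lebesgue covering dimension. Moreover, dim Z ≤ k − 1 where k is the order of the uniformly bounded cover of X produced from the cocompact isometric action. -/

import Mathlib

open Metric Set unitInterval TopologicalSpace Pointwise

/-- A separable metric space is an absolute retract (AR) if whenever it is embedded as a
closed subset of a separable metric space, it is a retract of that space. -/
def IsAR (W : Type) [MetricSpace W] : Prop :=
  SeparableSpace W ∧
    ∀ (Y : Type) [MetricSpace Y] [SeparableSpace Y] (f : W → Y),
      Topology.IsClosedEmbedding f → ∃ r : Y → W, Continuous r ∧ ∀ w, r (f w) = w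

/-- A family of sets has order at most `m` if every point lies in at most `m` members. -/
def OrderLE {X : Type*} (𝒰 : Set (Set X)) (m : ℕ) : Prop :=
  ∀ x : X, ∀ F : Finset (Set X), ↑F ⊆ 𝒰 → (∀ U ∈ F, x ∈ U) → F.card ≤ m

/-- A compact subset `Z` of a metric space has covering dimension at most `n` if for every
`ε > 0` there is a cover of `Z` by relatively open subsets of `Z` of mesh `< ε` and order at
most `n + 1`. -/
def SubsetCovDimLE {X : Type*} [MetricSpace X] (Z : Set X) (n : ℕ) : Prop :=
  ∀ ε : ℝ, 0 < ε → ∃ 𝒲 : Set (Set X), (∀ W ∈ 𝒲, ∃ O : Set X, IsOpen O ∧ W = O ∩ Z) ∧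
    Z ⊆ ⋃₀ 𝒲 ∧ OrderLE 𝒲 (n + 1) ∧ ∀ W ∈ 𝒲, Metric.diam W < ε

/-- **Theorem A.** If a proper metric space `(X, d)` admits a metric Z-structure
`(Xhat, Z)` — `Xhat` a compact AR which is a Z-compactification of `X = Xhat \ Z`, with a
cocompact isometric `G`-action on `X` satisfying the nullity condition — then `Z` has
finite covering dimension; indeed `dim Z ≤ k - 1` where `k` is the order of a uniformly
bounded open cover of `X` produced from the cocompact isometric action. -/
theorem boundary_finite_dimensional
    (Xhat : Type) [MetricSpace Xhat] [CompactSpace Xhat] (hAR : IsAR Xhat)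
    (Z : Set Xhat) (hZ : IsClosed Z)
    (H : Xhat × I → Xhat) (hHc : Continuous H)
    (hH0 : ∀ x : Xhat, H (x, 0) = x)
    (hHt : ∀ t : I, 0 < t → ∀ x : Xhat, H (x, t) ∉ Z)
    (X : Type) [MetricSpace X] [ProperSpace X]
    (i : X → Xhat) (hi : Topology.IsOpenEmbedding i) (hrange : Set.range i = Zᶜ)
    (G : Type) [Group G] [MulAction G X] [IsIsometricSMul G X]
    (hcocompact : ∃ K : Set X, IsCompact K ∧ ∀ x : X, ∃ g : G, ∃ k ∈ K, x = g • k)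
    (hnull : ∀ ε : ℝ, 0 < ε → ∀ U : Set X, Bornology.IsBounded U →
      ∃ C : Set X, IsCompact C ∧ ∀ g : G, (g • U) ∩ C = ∅ →
        Metric.diam (i '' (g • U)) < ε) :
    ∃ k : ℕ, (∃ 𝒰 : Set (Set X), (∀ U ∈ 𝒰, IsOpen U) ∧ ⋃₀ 𝒰 = univ ∧
        (∃ R : ℝ, ∀ U ∈ 𝒰, Metric.diam U ≤ R) ∧ OrderLE 𝒰 k) ∧
      SubsetCovDimLE Z (k - 1) := by
  classical
  obtain ⟨K, hK, hKcov⟩ := hcocompact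
  -- the compact 1-thickening of `K`
  set T : Set X := Metric.cthickening 1 K with hTdef
  have hTb : Bornology.IsBounded T := hK.isBounded.cthickening
  have hTc : IsCompact T :=
    Metric.isCompact_of_isClosed_isBounded Metric.isClosed_cthickening hTb
  -- a finite (1/2)-net for `T`
  obtain ⟨s, hsfin, hscov⟩ : ∃ s : Set X, s.Finite ∧ T ⊆ ⋃ y ∈ s, ball y (2⁻¹) :=
    Metric.totallyBounded_iff.1 hTc.totallyBounded 2⁻¹ (by norm_num)
  set M := hsfin.toFinset.card with hM
  -- counting lemma: a 1-separated set within distance 1 of a point has at most M elements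
  have hcount : ∀ (x : X) (F : Finset X), (∀ p ∈ F, dist x p < 1) →
      (∀ p ∈ F, ∀ q ∈ F, p ≠ q → 1 ≤ dist p q) → F.card ≤ M := by
    intro x F hdist hsep
    obtain ⟨g, kx, hkx, hx⟩ := hKcov x
    have hmem : ∀ p ∈ F, ∃ y ∈ s, g⁻¹ • p ∈ ball y 2⁻¹ := by
      intro p hp
      have hpT : g⁻¹ • p ∈ T := by
        apply Metric.thickening_subset_cthickening 1 K
        rw [Metric.mem_thickening_iff]
        refine ⟨kx, hkx, ?_⟩
        have h1 : dist (g⁻¹ • p) (g⁻¹ • x) = dist p x := dist_smul _ _ _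
        have h2 : g⁻¹ • x = kx := by rw [hx, inv_smul_smul]
        rw [h2] at h1
        rw [h1, dist_comm]
        exact hdist p hp
      have := hscov hpT
      simpa using this
    set f : X → X := fun p => if h : ∃ y ∈ s, g⁻¹ • p ∈ ball y 2⁻¹ then h.choose else p
      with hf
    have hfspec : ∀ p ∈ F, f p ∈ s ∧ g⁻¹ • p ∈ ball (f p) 2⁻¹ := by
      intro p hp
      have h := hmem p hp
      simp only [hf, dif_pos h]
      exact ⟨h.choose_spec.1, h.choose_spec.2⟩
    apply Finset.card_le_card_of_injOn f
    · intro p hp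
      simpa using (hfspec p hp).1
    · intro p hp q hq hfpq
      by_contra hne
      have h1 := (hfspec p (by simpa using hp)).2
      have h2 := (hfspec q (by simpa using hq)).2
      rw [hfpq] at h1
      have : dist (g⁻¹ • p) (g⁻¹ • q) < 1 := by
        calc dist (g⁻¹ • p) (g⁻¹ • q) ≤ dist (g⁻¹ • p) (f q) + dist (f q) (g⁻¹ • q) := dist_triangle _ _ _
        _ < 2⁻¹ + 2⁻¹ := by
            have := mem_ball.mp h1
            have := mem_ball.mp h2
            rw [dist_comm (f q)]
            gcongr <;> assumption
        _ = 1 := by norm_num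
      rw [dist_smul] at this
      exact absurd (hsep p (by simpa using hp) q (by simpa using hq) hne) (by linarith)
  -- a maximal 1-separated net
  obtain ⟨N, hN⟩ := zorn_subset {A : Set X | A.Pairwise fun p q => 1 ≤ dist p q} (by
    intro c hc hchain
    refine ⟨⋃₀ c, ?_, fun a ha => subset_sUnion_of_mem ha⟩
    rintro p ⟨A, hA, hpA⟩ q ⟨B, hB, hqB⟩ hpq
    rcases hchain.total hA hB with hAB | hBA
    · exact hc hB (hAB hpA) hqB hpq
    · exact hc hA hpA (hBA hqB) hpq)
  have hNsep : N.Pairwise fun p q => 1 ≤ dist p q := hN.prop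
  have hNnear : ∀ x : X, ∃ p ∈ N, dist x p < 1 := by
    intro x
    by_contra hcon
    push_neg at hcon
    have hins : insert x N ∈ {A : Set X | A.Pairwise fun p q => 1 ≤ dist p q} := by
      show (insert x N).Pairwise _
      rw [Set.pairwise_insert]
      refine ⟨hNsep, fun b hb _ => ⟨hcon b hb, by rw [dist_comm]; exact hcon b hb⟩⟩
    have hxN : x ∈ N := hN.2 hins (subset_insert x N) (mem_insert x N)
    have := hcon x hxN
    norm_num [dist_self] at this
  -- the uniformly bounded cover
  refine ⟨M + 1, ⟨(fun p => ball p 1) '' N, ?_, ?_, ⟨2, ?_⟩, ?_⟩, ?_⟩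
  · rintro U ⟨p, -, rfl⟩; exact isOpen_ball
  · apply eq_univ_of_forall; intro x
    obtain ⟨p, hp, hd⟩ := hNnear x
    exact ⟨ball p 1, ⟨p, hp, rfl⟩, mem_ball.mpr hd⟩
  · rintro U ⟨p, -, rfl⟩
    simpa using Metric.diam_ball (x := p) (by norm_num : (0:ℝ) ≤ 1)
  · -- order of the cover
    intro x F hFsub hFmem
    set f : Set X → X := fun W => if h : ∃ p, p ∈ N ∧ ball p 1 = W then h.choose else x
      with hf
    have hfspec : ∀ W ∈ F, f W ∈ N ∧ ball (f W) 1 = W := by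
      intro W hW
      obtain ⟨p, hp, hball⟩ := hFsub hW
      have h : ∃ p, p ∈ N ∧ ball p 1 = W := ⟨p, hp, hball⟩
      simp only [hf, dif_pos h]
      exact ⟨h.choose_spec.1, h.choose_spec.2⟩
    have hinj : Set.InjOn f F := by
      intro W₁ h₁ W₂ h₂ he
      rw [← (hfspec W₁ (by simpa using h₁)).2, ← (hfspec W₂ (by simpa using h₂)).2, he]
    calc F.card = (F.image f).card := (Finset.card_image_of_injOn hinj).symm
    _ ≤ M := by
        apply hcount x
        · intro p hp
          obtain ⟨W, hW, rfl⟩ := Finset.mem_image.mp hp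
          have hx := hFmem W hW
          rw [← (hfspec W hW).2] at hx
          exact mem_ball.mp hx
        · intro p hp q hq hne
          obtain ⟨W₁, hW₁, rfl⟩ := Finset.mem_image.mp hp
          obtain ⟨W₂, hW₂, rfl⟩ := Finset.mem_image.mp hq
          exact hNsep (hfspec W₁ hW₁).1 (hfspec W₂ hW₂).1 hne
    _ ≤ M + 1 := Nat.le_succ M
  -- the covering-dimension bound for Z
  · intro ε hε
    have hXhatB : ∀ s : Set Xhat, Bornology.IsBounded s := fun s =>
      (isCompact_univ.isBounded).subset (subset_univ s)
    set δ := ε / 4 with hδdef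
    have hδ : 0 < δ := by positivity
    have hU₀b : Bornology.IsBounded (Metric.thickening 1 K) := hK.isBounded.thickening
    obtain ⟨C, hCc, hC⟩ := hnull δ hδ (Metric.thickening 1 K) hU₀b
    set D := Metric.diam T with hD
    set N' := Metric.cthickening (D + 1) C with hN'
    have hN'c : IsCompact N' :=
      Metric.isCompact_of_isClosed_isBounded Metric.isClosed_cthickening
        hCc.isBounded.cthickening
    have hA : IsCompact (i '' N') := hN'c.image hi.continuous
    have hAZ : i '' N' ⊆ Zᶜ := by
      rintro - ⟨y, -, rfl⟩
      rw [← hrange]; exact mem_range_self y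
    obtain ⟨η, hη, hthick⟩ := hA.exists_thickening_subset_open hZ.isOpen_compl hAZ
    set c := min δ η with hcdef
    have hcpos : 0 < c := lt_min hδ hη
    -- a small time t₀
    have hHuc := CompactSpace.uniformContinuous_of_continuous hHc
    obtain ⟨δ', hδ', hd'⟩ := Metric.uniformContinuous_iff.1 hHuc c hcpos
    set t₀ : I := ⟨min (δ' / 2) 1, le_min (by positivity) zero_le_one, min_le_right _ _⟩
      with ht₀
    have ht₀pos : (0 : I) < t₀ := by
      rw [← unitInterval.coe_pos]
      exact lt_min (by positivity) one_pos
    have hmove : ∀ w : Xhat, dist (H (w, t₀)) w < c := by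
      intro w
      have h1 : dist ((w, t₀) : Xhat × I) (w, 0) < δ' := by
        rw [Prod.dist_eq]
        have h2 : dist t₀ (0 : I) = min (δ' / 2) 1 := by
          rw [Subtype.dist_eq, Real.dist_eq]
          simp [ht₀, abs_of_nonneg, le_min (by positivity : (0:ℝ) ≤ δ'/2) zero_le_one]
        simp only [dist_self, h2]
        rw [max_eq_right (le_min (by positivity : (0:ℝ) ≤ δ'/2) zero_le_one)]
        exact lt_of_le_of_lt (min_le_left _ _) (by linarith)
      have := hd' h1
      rwa [hH0 w] at this
    set Φ : Xhat → Xhat := fun w => H (w, t₀) with hΦ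
    have hΦc : Continuous Φ := hHc.comp (continuous_id.prodMk continuous_const)
    refine ⟨{W | ∃ p, p ∈ N ∧ Metric.diam (i '' ball p 1) < δ ∧
        W = Φ ⁻¹' (i '' ball p 1) ∩ Z}, ?_, ?_, ?_, ?_⟩
    · rintro W ⟨p, hp, hgood, rfl⟩
      exact ⟨Φ ⁻¹' (i '' ball p 1), (hi.isOpenMap _ isOpen_ball).preimage hΦc, rfl⟩
    · -- coverage
      intro z hz
      have hzt : Φ z ∉ Z := hHt t₀ ht₀pos z
      have hzr : Φ z ∈ range i := by rw [hrange]; exact hzt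
      obtain ⟨x, hx⟩ := hzr
      have hxN' : x ∉ N' := by
        intro hmem
        have hzth : z ∈ Metric.thickening η (i '' N') := by
          rw [Metric.mem_thickening_iff]
          refine ⟨i x, ⟨x, hmem, rfl⟩, ?_⟩
          rw [hx, dist_comm]
          exact lt_of_lt_of_le (hmove z) (min_le_right _ _)
        exact (hthick hzth) hz
      obtain ⟨p, hpN, hdxp⟩ := hNnear x
      obtain ⟨g, kp, hkp, hpg⟩ := hKcov p
      have hdisj : (g • Metric.thickening 1 K) ∩ C = ∅ := by
        rw [eq_empty_iff_forall_notMem]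
        rintro w ⟨hw1, hw2⟩
        obtain ⟨u, hu, rfl⟩ := hw1
        have hd1 : dist (g • u) p ≤ D := by
          rw [hpg, dist_smul]
          exact Metric.dist_le_diam_of_mem hTb
            (Metric.thickening_subset_cthickening 1 K hu)
            (Metric.self_subset_cthickening K hkp)
        have hd2 : dist x (g • u) ≤ D + 1 := by
          calc dist x (g • u) ≤ dist x p + dist p (g • u) := dist_triangle _ _ _
          _ ≤ 1 + D := by rw [dist_comm p]; exact add_le_add hdxp.le hd1
          _ = D + 1 := by ring
        exact hxN' (Metric.mem_cthickening_of_dist_le x (g • u) (D + 1) C hw2 hd2)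
      have hsub : ball p 1 ⊆ g • Metric.thickening 1 K := by
        intro y hy
        rw [mem_smul_set_iff_inv_smul_mem, Metric.mem_thickening_iff]
        refine ⟨kp, hkp, ?_⟩
        have h1 : dist (g⁻¹ • y) (g⁻¹ • p) = dist y p := dist_smul _ _ _
        have h2 : g⁻¹ • p = kp := by rw [hpg, inv_smul_smul]
        rw [h2] at h1
        rw [h1]
        exact mem_ball.mp hy
      have hgood : Metric.diam (i '' ball p 1) < δ :=
        lt_of_le_of_lt (Metric.diam_mono (image_mono (f := i) hsub) (hXhatB _)) (hC g hdisj)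
      exact ⟨Φ ⁻¹' (i '' ball p 1) ∩ Z, ⟨p, hpN, hgood, rfl⟩,
        ⟨⟨x, mem_ball.mpr hdxp, hx⟩, hz⟩⟩
    · -- order
      show OrderLE _ (M + 1 - 1 + 1)
      simp only [Nat.add_sub_cancel]
      intro w F hFsub hFmem
      rcases F.eq_empty_or_nonempty with rfl | ⟨W₀, hW₀⟩
      · simp
      obtain ⟨p₀, hp₀, hgood₀, hW₀eq⟩ := hFsub hW₀
      have hwZ : w ∈ Z := by
        have := hFmem W₀ hW₀
        rw [hW₀eq] at this
        exact this.2
      have hzt : Φ w ∉ Z := hHt t₀ ht₀pos w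
      have hzr : Φ w ∈ range i := by rw [hrange]; exact hzt
      obtain ⟨xw, hxw⟩ := hzr
      set f : Set Xhat → X := fun W =>
        if h : ∃ p, p ∈ N ∧ Metric.diam (i '' ball p 1) < δ ∧
            W = Φ ⁻¹' (i '' ball p 1) ∩ Z then h.choose else xw
        with hf
      have hfspec : ∀ W ∈ F, f W ∈ N ∧ W = Φ ⁻¹' (i '' ball (f W) 1) ∩ Z := by
        intro W hW
        have h := hFsub hW
        obtain ⟨p, hp, hg, he⟩ := h
        have h' : ∃ p, p ∈ N ∧ Metric.diam (i '' ball p 1) < δ ∧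
            W = Φ ⁻¹' (i '' ball p 1) ∩ Z := ⟨p, hp, hg, he⟩
        simp only [hf, dif_pos h']
        exact ⟨h'.choose_spec.1, h'.choose_spec.2.2⟩
      have hinj : Set.InjOn f F := by
        intro W₁ h₁ W₂ h₂ he
        rw [(hfspec W₁ (by simpa using h₁)).2, (hfspec W₂ (by simpa using h₂)).2, he]
      have hnear : ∀ W ∈ F, dist xw (f W) < 1 := by
        intro W hW
        have hmemW := hFmem W hW
        rw [(hfspec W hW).2] at hmemW
        obtain ⟨⟨y, hy, hyeq⟩, -⟩ := hmemW
        have : y = xw := hi.injective (by rw [hyeq, hxw])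
        rw [← this]
        exact mem_ball.mp hy
      calc F.card = (F.image f).card := (Finset.card_image_of_injOn hinj).symm
      _ ≤ M := by
          apply hcount xw
          · intro p hp
            obtain ⟨W, hW, rfl⟩ := Finset.mem_image.mp hp
            exact hnear W hW
          · intro p hp q hq hne
            obtain ⟨W₁, hW₁, rfl⟩ := Finset.mem_image.mp hp
            obtain ⟨W₂, hW₂, rfl⟩ := Finset.mem_image.mp hq
            exact hNsep (hfspec W₁ hW₁).1 (hfspec W₂ hW₂).1 hne
      _ ≤ M + 1 := Nat.le_succ M
    · -- small mesh
      rintro W ⟨p, hp, hgood, rfl⟩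
      have hbound : ∀ z ∈ Φ ⁻¹' (i '' ball p 1) ∩ Z, ∀ z' ∈ Φ ⁻¹' (i '' ball p 1) ∩ Z,
          dist z z' ≤ 3 * δ := by
        intro z hz z' hz'
        have h1 : dist (Φ z) z < δ := lt_of_lt_of_le (hmove z) (min_le_left _ _)
        have h2 : dist (Φ z') z' < δ := lt_of_lt_of_le (hmove z') (min_le_left _ _)
        have h3 : dist (Φ z) (Φ z') ≤ Metric.diam (i '' ball p 1) :=
          Metric.dist_le_diam_of_mem (hXhatB _) hz.1 hz'.1
        calc dist z z' ≤ dist z (Φ z) + dist (Φ z) (Φ z') + dist (Φ z') z' :=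
          dist_triangle4 _ _ _ _
        _ ≤ δ + δ + δ := by
            rw [dist_comm z (Φ z)]
            exact add_le_add (add_le_add h1.le (h3.trans hgood.le)) h2.le
        _ = 3 * δ := by ring
      calc Metric.diam (Φ ⁻¹' (i '' ball p 1) ∩ Z) ≤ 3 * δ :=
        Metric.diam_le_of_forall_dist_le (by positivity) hbound
      _ < ε := by rw [hδdef]; linarith
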